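/- Let G be a group, let V and E be finite types with source and target maps s, t : E → V, and let T ⊆ E be a spanning tree (the equivalence relation on V generated by {(s e, t e) : e ∈ T} is the total relation, and card T = card V − 1). Let G^V act on the space of graph connections G^E by (k·g)(e) = k(s e)⁻¹ · g(e) · k(t e), and let G act on G^{E∖T} by simultaneous conjugation (c·h)(e) = c⁻¹ · h(e) · c. Then the map G^{E∖T} → G^E that extends h by the identity element on all edges of T induces a bijection between the orbit space G^{E∖T}/Ad(G) and the orbit space G^E/G^V. (Tree gauge fixing: the space of gauge-invariant graph connections on a connected graph is isomorphic to G^h/Ad(G), where h = card E − card V + 1.) -/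
import Mathlib



/-- The orbit relation on graph connections `G^E` under the gauge group `G^V`:
`(k·g)(e) = k(s e)⁻¹ · g(e) · k(t e)`. -/
def gaugeRel (G : Type*) [Group G] {V E : Type*} (s t : E → V) :
    (E → G) → (E → G) → Prop :=
  fun g g' => ∃ k : V → G, ∀ e, g' e = (k (s e))⁻¹ * g e * k (t e)

/-- The orbit relation under simultaneous conjugation: `(c·h)(e) = c⁻¹ · h(e) · c`. -/
def adRel (G : Type*) [Group G] {α : Type*} : (α → G) → (α → G) → Prop :=
  fun h h' => ∃ c : G, ∀ x, h' x = c⁻¹ * h x * c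

/-- Extend a connection defined on the edges off the tree `T` by the identity on `T`. -/
def extendByOne {G E : Type*} [One G] [DecidableEq E] (T : Finset E)
    (h : {e : E // e ∉ T} → G) : E → G :=
  fun e => if he : e ∈ T then 1 else h ⟨e, he⟩

lemma extendByOne_compat {G V E : Type*} [Group G] [DecidableEq E]
    (s t : E → V) (T : Finset E) :
    ∀ h h' : {e : E // e ∉ T} → G, adRel G h h' →
      gaugeRel G s t (extendByOne T h) (extendByOne T h') := by
  rintro h h' ⟨c, hc⟩
  refine ⟨fun _ => c, fun e => ?_⟩
  by_cases he : e ∈ T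
  · simp [extendByOne, he]
  · simp [extendByOne, he, hc ⟨e, he⟩]


open Relation

section Aux

variable {V E : Type*}

/-- The relation on vertices generated by the edges in `T`. -/
def trel (s t : E → V) (T : Finset E) : V → V → Prop :=
  fun a b => ∃ e ∈ T, s e = a ∧ t e = b

lemma eqvGen_empty {s t : E → V} {x y : V}
    (h : EqvGen (trel s t (∅ : Finset E)) x y) : x = y := by
  induction h with
  | rel a b hab => obtain ⟨e, he, -⟩ := hab; exact absurd he (Finset.notMem_empty e)
  | refl a => rfl
  | symm a b _ ih => exact ih.symm
  | trans a b c _ _ ih1 ih2 => exact ih1.trans ih2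

lemma eqvGen_insert [DecidableEq E] {s t : E → V} {T : Finset E} {e₀ : E} {x y : V}
    (h : EqvGen (trel s t (insert e₀ T)) x y) :
    EqvGen (trel s t T) x y ∨
      ((EqvGen (trel s t T) x (s e₀) ∨ EqvGen (trel s t T) x (t e₀)) ∧
       (EqvGen (trel s t T) y (s e₀) ∨ EqvGen (trel s t T) y (t e₀))) := by
  induction h with
  | rel a b hab =>
    obtain ⟨e, he, hs, ht⟩ := hab
    rcases Finset.mem_insert.1 he with rfl | he
    · exact Or.inr ⟨Or.inl (hs ▸ EqvGen.refl _), Or.inr (ht ▸ EqvGen.refl _)⟩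
    · exact Or.inl (EqvGen.rel _ _ ⟨e, he, hs, ht⟩)
  | refl a => exact Or.inl (EqvGen.refl a)
  | symm a b _ ih =>
    rcases ih with h | ⟨h1, h2⟩
    · exact Or.inl (EqvGen.symm _ _ h)
    · exact Or.inr ⟨h2, h1⟩
  | trans a b c _ _ ih1 ih2 =>
    rcases ih1 with h1 | ⟨h1, h1'⟩
    · rcases ih2 with h2 | ⟨h2, h2'⟩
      · exact Or.inl (EqvGen.trans _ _ _ h1 h2)
      · exact Or.inr ⟨h2.imp (EqvGen.trans _ _ _ h1) (EqvGen.trans _ _ _ h1), h2'⟩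
    · rcases ih2 with h2 | ⟨h2, h2'⟩
      · exact Or.inr ⟨h1, h1'.imp (EqvGen.trans _ _ _ (EqvGen.symm _ _ h2))
          (EqvGen.trans _ _ _ (EqvGen.symm _ _ h2))⟩
      · exact Or.inr ⟨h1, h2'⟩

lemma eqvGen_insert_of_eqvGen [DecidableEq E] {s t : E → V} {T : Finset E} {e₀ : E}
    (hab : EqvGen (trel s t T) (s e₀) (t e₀)) {x y : V}
    (h : EqvGen (trel s t (insert e₀ T)) x y) : EqvGen (trel s t T) x y := by
  induction h with
  | rel a b hab' =>
    obtain ⟨e, he, hs, ht⟩ := hab'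
    rcases Finset.mem_insert.1 he with rfl | he
    · exact hs ▸ ht ▸ hab
    · exact EqvGen.rel _ _ ⟨e, he, hs, ht⟩
  | refl a => exact EqvGen.refl a
  | symm a b _ ih => exact EqvGen.symm _ _ ih
  | trans a b c _ _ ih1 ih2 => exact EqvGen.trans _ _ _ ih1 ih2

lemma eqvGen_mono_insert [DecidableEq E] {s t : E → V} {T : Finset E} {e₀ : E} :
    ∀ a b, trel s t T a b → trel s t (insert e₀ T) a b :=
  fun _ _ ⟨e, he, h⟩ => ⟨e, Finset.mem_insert_of_mem he, h⟩

variable [Finite V]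

/-- Inserting an edge drops the number of classes by at most one. -/
lemma card_quot_le_insert [DecidableEq E] (s t : E → V) (T : Finset E) (e₀ : E) :
    Nat.card (Quot (trel s t T)) ≤ Nat.card (Quot (trel s t (insert e₀ T))) + 1 := by
  classical
  set Q := Quot (trel s t T)
  set Qi := Quot (trel s t (insert e₀ T))
  let m : Q → Qi := Quot.map id eqvGen_mono_insert
  have hm : ∀ x : V, m (Quot.mk _ x) = Quot.mk _ x := fun x => rfl
  let F : Q → Option Qi := fun q =>
    if q = Quot.mk _ (s e₀) then none else some (m q)
  have key : ∀ x y : V, Quot.mk (trel s t T) x ≠ Quot.mk _ (s e₀) →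
      Quot.mk (trel s t T) y ≠ Quot.mk _ (s e₀) →
      m (Quot.mk _ x) = m (Quot.mk _ y) → Quot.mk (trel s t T) x = Quot.mk _ y := by
    intro x y hx hy hmxy
    rw [hm, hm, Quot.eq] at hmxy
    rcases eqvGen_insert hmxy with h | ⟨h1, h2⟩
    · exact Quot.eq.2 h
    · have hx' : EqvGen (trel s t T) x (t e₀) := by
        rcases h1 with h1 | h1
        · exact absurd (Quot.eq.2 h1) hx
        · exact h1
      have hy' : EqvGen (trel s t T) y (t e₀) := by
        rcases h2 with h2 | h2
        · exact absurd (Quot.eq.2 h2) hy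
        · exact h2
      exact Quot.eq.2 (EqvGen.trans _ _ _ hx' (EqvGen.symm _ _ hy'))
  have hF : Function.Injective F := by
    intro q1 q2 hq
    induction q1 using Quot.ind with | _ x =>
    induction q2 using Quot.ind with | _ y =>
    by_cases h1 : Quot.mk (trel s t T) x = Quot.mk _ (s e₀) <;>
      by_cases h2 : Quot.mk (trel s t T) y = Quot.mk _ (s e₀)
    · exact h1.trans h2.symm
    · simp only [F, if_pos h1, if_neg h2] at hq; exact absurd hq (by simp)
    · simp only [F, if_neg h1, if_pos h2] at hq; exact absurd hq (by simp)
    · simp only [F, if_neg h1, if_neg h2, Option.some_inj] at hq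
      exact key x y h1 h2 hq
  haveI : Finite Qi := Quot.finite _
  haveI := Fintype.ofFinite Qi
  calc Nat.card Q ≤ Nat.card (Option Qi) := Nat.card_le_card_of_injective F hF
    _ = Nat.card Qi + 1 := Finite.card_option

/-- If the endpoints of `e₀` are already connected, inserting `e₀` doesn't change classes. -/
lemma card_quot_insert_eq [DecidableEq E] {s t : E → V} {T : Finset E} {e₀ : E}
    (hab : EqvGen (trel s t T) (s e₀) (t e₀)) :
    Nat.card (Quot (trel s t (insert e₀ T))) = Nat.card (Quot (trel s t T)) := by
  let m : Quot (trel s t T) → Quot (trel s t (insert e₀ T)) :=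
    Quot.map id eqvGen_mono_insert
  have hbij : Function.Bijective m := by
    constructor
    · intro q1 q2 hq
      induction q1 using Quot.ind with | _ x =>
      induction q2 using Quot.ind with | _ y =>
      have : EqvGen (trel s t (insert e₀ T)) x y := Quot.eq.1 hq
      exact Quot.eq.2 (eqvGen_insert_of_eqvGen hab this)
    · intro q
      induction q using Quot.ind with | _ x =>
      exact ⟨Quot.mk _ x, rfl⟩
  exact (Nat.card_eq_of_bijective m hbij).symm

variable [Fintype V]

lemma card_quot_lower_bound [DecidableEq E] (s t : E → V) (T : Finset E) :
    Fintype.card V ≤ Nat.card (Quot (trel s t T)) + T.card := by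
  classical
  induction T using Finset.induction_on with
  | empty =>
    have hinj : Function.Injective (Quot.mk (trel s t (∅ : Finset E))) :=
      fun x y h => eqvGen_empty (Quot.eq.1 h)
    simpa [← Nat.card_eq_fintype_card] using Nat.card_le_card_of_injective _ hinj
  | @insert e₀ T he ih =>
    have h1 := card_quot_le_insert s t T e₀
    have h2 : (insert e₀ T).card = T.card + 1 := Finset.card_insert_of_notMem he
    omega

lemma tree_gauge_exists {G : Type*} [Group G] [DecidableEq E]
    (s t : E → V) (g : E → G) (T : Finset E)
    (hc : Nat.card (Quot (trel s t T)) + T.card = Fintype.card V) :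
    ∃ k : V → G, ∀ e ∈ T, (k (s e))⁻¹ * g e * k (t e) = 1 := by
  classical
  induction T using Finset.strongInduction with
  | _ T ih =>
  rcases T.eq_empty_or_nonempty with rfl | ⟨e₀, he₀⟩
  · exact ⟨fun _ => 1, fun e he => absurd he (Finset.notMem_empty e)⟩
  · set T' := T.erase e₀ with hT'
    have hins : insert e₀ T' = T := Finset.insert_erase he₀
    have hne : e₀ ∉ T' := Finset.notMem_erase e₀ T
    have hcardT : T.card = T'.card + 1 := by
      rw [← hins, Finset.card_insert_of_notMem hne]
    have hub : Nat.card (Quot (trel s t T')) ≤ Nat.card (Quot (trel s t T)) + 1 := by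
      have := card_quot_le_insert s t T' e₀
      rwa [hins] at this
    have hlb := card_quot_lower_bound s t T'
    have hc' : Nat.card (Quot (trel s t T')) = Nat.card (Quot (trel s t T)) + 1 := by omega
    have hc'' : Nat.card (Quot (trel s t T')) + T'.card = Fintype.card V := by omega
    have hnab : ¬ EqvGen (trel s t T') (s e₀) (t e₀) := by
      intro hab
      have := card_quot_insert_eq hab
      rw [hins] at this
      omega
    obtain ⟨k', hk'⟩ := ih T' (Finset.erase_ssubset he₀) hc''
    set d : G := (k' (t e₀))⁻¹ * (g e₀)⁻¹ * k' (s e₀) with hd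
    refine ⟨fun v => if EqvGen (trel s t T') v (t e₀) then k' v * d else k' v, ?_⟩
    intro e he
    rcases Finset.mem_insert.1 (hins ▸ he) with rfl | heT'
    · have h1 : ¬ EqvGen (trel s t T') (s e) (t e) := hnab
      have h2 : EqvGen (trel s t T') (t e) (t e) := EqvGen.refl _
      simp only [if_neg h1, if_pos h2, hd]
      group
    · have hrel : EqvGen (trel s t T') (s e) (t e) :=
        EqvGen.rel _ _ ⟨e, heT', rfl, rfl⟩
      have hg : g e = k' (s e) * (k' (t e))⁻¹ := by
        have h1 := hk' e heT'
        calc g e = k' (s e) * ((k' (s e))⁻¹ * g e * k' (t e)) * (k' (t e))⁻¹ := by group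
          _ = k' (s e) * (k' (t e))⁻¹ := by rw [h1]; group
      by_cases hP : EqvGen (trel s t T') (s e) (t e₀)
      · have hQ : EqvGen (trel s t T') (t e) (t e₀) :=
          EqvGen.trans _ _ _ (EqvGen.symm _ _ hrel) hP
        simp only [if_pos hP, if_pos hQ, hg]
        group
      · have hQ : ¬ EqvGen (trel s t T') (t e) (t e₀) := fun h =>
          hP (EqvGen.trans _ _ _ hrel h)
        simp only [if_neg hP, if_neg hQ, hg]
        group

end Aux

lemma gaugeRel_equivalence (G : Type*) [Group G] {V E : Type*} (s t : E → V) :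
    Equivalence (gaugeRel G s t) := by
  constructor
  · exact fun g => ⟨fun _ => 1, fun e => by group⟩
  · rintro g g' ⟨k, hk⟩
    exact ⟨fun v => (k v)⁻¹, fun e => by rw [hk e]; group⟩
  · rintro g g' g'' ⟨k, hk⟩ ⟨k', hk'⟩
    exact ⟨fun v => k v * k' v, fun e => by rw [hk' e, hk e]; group⟩

theorem tree_gauge_fixing_bijective {G V E : Type*} [Group G]
    [Fintype V] [Fintype E] [DecidableEq E] (s t : E → V) (T : Finset E)
    (hconn : ∀ v w : V,
      Relation.EqvGen (fun a b => ∃ e ∈ T, s e = a ∧ t e = b) v w)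
    (hcard : T.card = Fintype.card V - 1) :
    Function.Bijective
      (Quot.map (extendByOne T) (extendByOne_compat s t T) :
        Quot (adRel G (α := {e : E // e ∉ T})) → Quot (gaugeRel G s t)) := by
  classical
  have hconn' : ∀ v w : V, EqvGen (trel s t T) v w := hconn
  -- the class count
  have hc : Nat.card (Quot (trel s t T)) + T.card = Fintype.card V := by
    rcases isEmpty_or_nonempty V with hV | hV
    · have hE : IsEmpty E := ⟨fun e => (hV.false (s e))⟩
      have hT : T = ∅ := Finset.eq_empty_of_isEmpty T
      have : IsEmpty (Quot (trel s t T)) :=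
        ⟨fun q => @Quot.ind _ _ (fun _ => False) (fun v => hV.false v) q⟩
      simp [hT, Nat.card_of_isEmpty, Fintype.card_eq_zero]
    · have h1 : Nat.card (Quot (trel s t T)) = 1 := by
        rw [Nat.card_eq_one_iff_unique]
        constructor
        · constructor
          intro q1 q2
          induction q1 using Quot.ind with | _ x =>
          induction q2 using Quot.ind with | _ y =>
          exact Quot.eq.2 (hconn' x y)
        · exact ⟨Quot.mk _ (Classical.arbitrary V)⟩
      have h2 : 1 ≤ Fintype.card V := Fintype.card_pos
      omega
  constructor
  · -- injectivity
    intro q1 q2 hq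
    induction q1 using Quot.ind with | _ h =>
    induction q2 using Quot.ind with | _ h' =>
    simp only [Quot.map] at hq
    have hg : gaugeRel G s t (extendByOne T h) (extendByOne T h') :=
      ((gaugeRel_equivalence G s t).eqvGen_iff).1 (Quot.eq.1 hq)
    obtain ⟨k, hk⟩ := hg
    have hsame : ∀ e ∈ T, k (s e) = k (t e) := by
      intro e he
      have := hk e
      simp only [extendByOne, dif_pos he, mul_one] at this
      exact inv_mul_eq_one.1 this.symm
    have hconst : ∀ v w : V, k v = k w := by
      intro v w
      induction hconn' v w with
      | rel a b hab => obtain ⟨e, he, rfl, rfl⟩ := hab; exact hsame e he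
      | refl a => rfl
      | symm a b _ ih => exact ih.symm
      | trans a b c _ _ ih1 ih2 => exact ih1.trans ih2
    rcases isEmpty_or_nonempty V with hV | hV
    · have hE : IsEmpty E := ⟨fun e => (hV.false (s e))⟩
      exact Quot.sound ⟨1, fun x => (hE.false x.val).elim⟩
    · obtain ⟨v₀⟩ := hV
      refine Quot.sound ⟨k v₀, fun x => ?_⟩
      have hx := hk x.val
      simp only [extendByOne, dif_neg x.prop] at hx
      rw [hx, hconst (s x.val) v₀, hconst (t x.val) v₀]
  · -- surjectivity
    intro q
    induction q using Quot.ind with | _ g =>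
    obtain ⟨k, hk⟩ := tree_gauge_exists s t g T hc
    set g' : E → G := fun e => (k (s e))⁻¹ * g e * k (t e) with hg'
    refine ⟨Quot.mk _ (fun x => g' x.val), ?_⟩
    have hext : extendByOne T (fun x : {e : E // e ∉ T} => g' x.val) = g' := by
      funext e
      by_cases he : e ∈ T
      · simp only [extendByOne, dif_pos he]
        exact (hk e he).symm
      · simp only [extendByOne, dif_neg he]
    simp only [Quot.map, hext]
    exact (Quot.sound ⟨k, fun e => rfl⟩).symm
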